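/- Let C ⊂ ℝ^d be nonempty, closed, convex. Consider the optimistic projected-gradient scheme y_t = Π_C(y'_t - η m_t) and y'_{t+1} = Π_C(y'_t - η ĝ_t) with y'_1 ∈ C and η > 0. Then for any fixed y★ ∈ C and any horizon T ≥ 1: Σ_{t=1}^T ⟨ĝ_t, y_t - y★⟩ ≤ ‖y★ - y'_1‖²/(2η) + η Σ_{t=1}^T ‖ĝ_t - m_t‖². -/

import Mathlib

set_option maxHeartbeats 1000000


open scoped RealInnerProductSpace

/-- Per-step inequality for the optimistic projected-gradient analysis. -/
lemma opg_step {d : ℕ} (η : ℝ) (hη : 0 < η) (a b p s G M : EuclideanSpace ℝ (Fin d))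
    (hA : ⟪a - η • G - b, s - b⟫ ≤ 0)
    (hB : ⟪a - η • M - p, b - p⟫ ≤ 0) :
    η * ⟪G, p - s⟫ ≤ η ^ 2 * ‖G - M‖ ^ 2 + (‖a - s‖ ^ 2 - ‖b - s‖ ^ 2) / 2 := by
  have hCS := real_inner_le_norm (G - M) (p - b)
  have hGM : η * ⟪G - M, p - b⟫ ≤ η ^ 2 * ‖G - M‖ ^ 2 + ‖p - b‖ ^ 2 / 4 := by
    nlinarith [sq_nonneg (η * ‖G - M‖ - ‖p - b‖ / 2), mul_le_mul_of_nonneg_left hCS hη.le]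
  have hA' : η * ⟪G, b - s⟫ ≤ ⟪a - b, b - s⟫ := by
    simp only [inner_sub_left, inner_sub_right, real_inner_smul_left] at hA ⊢
    linarith
  have hB' : η * ⟪M, p - b⟫ ≤ ⟪a - p, p - b⟫ := by
    simp only [inner_sub_left, inner_sub_right, real_inner_smul_left] at hB ⊢
    linarith
  have I1 := norm_add_sq_real (a - b) (b - s)
  rw [sub_add_sub_cancel] at I1
  have I2 := norm_add_sq_real (a - p) (p - b)
  rw [sub_add_sub_cancel] at I2
  have hdec : η * ⟪G, p - s⟫ = η * ⟪G - M, p - b⟫ + η * ⟪M, p - b⟫ + η * ⟪G, b - s⟫ := by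
    simp only [inner_sub_left, inner_sub_right]; ring
  nlinarith [sq_nonneg ‖a - p‖, sq_nonneg ‖p - b‖]

theorem optimistic_projected_gradient_regret {d : ℕ}
    (C : Set (EuclideanSpace ℝ (Fin d))) (hconv : Convex ℝ C)
    (hclosed : IsClosed C) (hne : C.Nonempty)
    (P : EuclideanSpace ℝ (Fin d) → EuclideanSpace ℝ (Fin d))
    (hP : ∀ u, P u ∈ C ∧ ∀ w ∈ C, ‖u - P u‖ ≤ ‖u - w‖)
    (η : ℝ) (hη : 0 < η)
    (m g y y' : ℕ → EuclideanSpace ℝ (Fin d))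
    (hy'1 : y' 1 ∈ C)
    (hy : ∀ t, y t = P (y' t - η • m t))
    (hy' : ∀ t, y' (t + 1) = P (y' t - η • g t))
    (ystar : EuclideanSpace ℝ (Fin d)) (hstar : ystar ∈ C)
    (T : ℕ) (hT : 1 ≤ T) :
    ∑ t ∈ Finset.Icc 1 T, ⟪g t, y t - ystar⟫ ≤
      ‖ystar - y' 1‖ ^ 2 / (2 * η) + η * ∑ t ∈ Finset.Icc 1 T, ‖g t - m t‖ ^ 2 := by
  haveI : Nonempty ↥C := hne.to_subtype
  -- variational inequality for the projection
  have key : ∀ u, ∀ w ∈ C, ⟪u - P u, w - P u⟫ ≤ 0 := by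
    intro u
    have hmin : ‖u - P u‖ = ⨅ w : C, ‖u - w‖ := by
      refine le_antisymm (le_ciInf fun w => (hP u).2 w w.2) ?_
      have hb : BddBelow (Set.range fun w : C => ‖u - w‖) :=
        ⟨0, fun x ⟨w, h⟩ => h ▸ norm_nonneg _⟩
      exact ciInf_le hb ⟨P u, (hP u).1⟩
    exact (norm_eq_iInf_iff_real_inner_le_zero hconv (hP u).1).mp hmin
  -- per-step inequality
  have step : ∀ t, η * ⟪g t, y t - ystar⟫ ≤
      η ^ 2 * ‖g t - m t‖ ^ 2 + (‖y' t - ystar‖ ^ 2 - ‖y' (t + 1) - ystar‖ ^ 2) / 2 := by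
    intro t
    have hA : ⟪y' t - η • g t - y' (t + 1), ystar - y' (t + 1)⟫ ≤ 0 := by
      rw [hy' t]; exact key _ _ hstar
    have hB : ⟪y' t - η • m t - y t, y' (t + 1) - y t⟫ ≤ 0 := by
      rw [hy t, hy' t]; exact key _ _ (hP _).1
    exact opg_step η hη _ _ _ _ _ _ hA hB
  -- telescoping sum
  have main : ∀ N, ∑ t ∈ Finset.Icc 1 N, η * ⟪g t, y t - ystar⟫
      + ‖y' (N + 1) - ystar‖ ^ 2 / 2 ≤
      ‖y' 1 - ystar‖ ^ 2 / 2 + η ^ 2 * ∑ t ∈ Finset.Icc 1 N, ‖g t - m t‖ ^ 2 := by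
    intro N
    induction N with
    | zero => simp
    | succ N ih =>
      rw [Finset.sum_Icc_succ_top (by omega : 1 ≤ N + 1),
        Finset.sum_Icc_succ_top (by omega : 1 ≤ N + 1)]
      have := step (N + 1)
      nlinarith [this, ih]
  have hmain := main T
  have hnn : (0:ℝ) ≤ ‖y' (T + 1) - ystar‖ ^ 2 / 2 := by positivity
  rw [← Finset.mul_sum] at hmain
  have hrev : ‖ystar - y' 1‖ = ‖y' 1 - ystar‖ := norm_sub_rev _ _
  rw [hrev, ← mul_le_mul_iff_right₀ hη]
  have heq : η * (‖y' 1 - ystar‖ ^ 2 / (2 * η) + η * ∑ t ∈ Finset.Icc 1 T, ‖g t - m t‖ ^ 2)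
      = ‖y' 1 - ystar‖ ^ 2 / 2 + η ^ 2 * ∑ t ∈ Finset.Icc 1 T, ‖g t - m t‖ ^ 2 := by
    field_simp
  rw [heq]
  linarith
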